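/- Every K-Lusin Rothberger space is σ-compact. -/

import Mathlib

open Set Function TopologicalSpace MeasureTheory

universe u

/-- A space is analytic if it is a continuous image of the Baire space `ℕ → ℕ`. -/
def IsAnalyticSpace (X : Type*) [TopologicalSpace X] : Prop :=
  ∃ f : (ℕ → ℕ) → X, Continuous f ∧ Surjective f

/-- A space is Lusin if it is an injective continuous image of the Baire space. -/
def IsLusinSpace (X : Type*) [TopologicalSpace X] : Prop :=
  ∃ f : (ℕ → ℕ) → X, Continuous f ∧ Injective f ∧ Surjective f

/-- A map is perfect if it is continuous, closed, and has compact fibers. -/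
def IsPerfectMap {X Y : Type*} [TopologicalSpace X] [TopologicalSpace Y] (f : X → Y) : Prop :=
  Continuous f ∧ IsClosedMap f ∧ ∀ y : Y, IsCompact (f ⁻¹' {y})

/-- The remainder `βX \ X` of a space in its Stone–Čech compactification. -/
def StoneCechRemainder (X : Type u) [TopologicalSpace X] : Set (StoneCech X) :=
  (Set.range (stoneCechUnit : X → StoneCech X))ᶜ

/-- A space is co-analytic if its Stone–Čech remainder is analytic. -/
def CoAnalytic (X : Type u) [TopologicalSpace X] : Prop :=
  IsAnalyticSpace ↥(StoneCechRemainder X)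

/-- A space is Čech-complete if it is a `Gδ` subset of its Stone–Čech compactification. -/
def CechComplete (X : Type u) [TopologicalSpace X] : Prop :=
  IsGδ (Set.range (stoneCechUnit : X → StoneCech X))

/-- A space is K-analytic if it is a continuous image of a Lindelöf Čech-complete
(Tychonoff) space. -/
def KAnalytic (X : Type u) [TopologicalSpace X] : Prop :=
  ∃ (Y : Type u) (_ : TopologicalSpace Y) (_ : T35Space Y),
    LindelofSpace Y ∧ CechComplete Y ∧ ∃ f : Y → X, Continuous f ∧ Surjective f

/-- A space is K-Lusin if it is an injective continuous image of a Lindelöf Čech-complete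
(Tychonoff) space. -/
def KLusin (X : Type u) [TopologicalSpace X] : Prop :=
  ∃ (Y : Type u) (_ : TopologicalSpace Y) (_ : T35Space Y),
    LindelofSpace Y ∧ CechComplete Y ∧ ∃ f : Y → X, Continuous f ∧ Injective f ∧ Surjective f

/-- The Menger property. -/
def MengerSpace (X : Type*) [TopologicalSpace X] : Prop :=
  ∀ U : ℕ → Set (Set X), (∀ n, ∀ u ∈ U n, IsOpen u) → (∀ n, ⋃₀ U n = univ) →
    ∃ V : ℕ → Set (Set X), (∀ n, V n ⊆ U n ∧ (V n).Finite) ∧ ⋃₀ (⋃ n, V n) = univ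

/-- The Rothberger property. -/
def RothbergerSpace (X : Type*) [TopologicalSpace X] : Prop :=
  ∀ U : ℕ → Set (Set X), (∀ n, ∀ u ∈ U n, IsOpen u) → (∀ n, ⋃₀ U n = univ) →
    ∃ V : ℕ → Set X, (∀ n, V n ∈ U n) ∧ (⋃ n, V n) = univ

/-- A space is productively Lindelöf if its product with every Lindelöf (Tychonoff)
space is Lindelöf. -/
def ProductivelyLindelof (X : Type u) [TopologicalSpace X] : Prop :=
  ∀ (Y : Type u) (_ : TopologicalSpace Y) (_ : T35Space Y),
    LindelofSpace Y → LindelofSpace (X × Y)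

/-- A Michael space is a Lindelöf (Tychonoff) space whose product with the Baire space
is not Lindelöf. -/
def ExistsMichaelSpace : Prop :=
  ∃ (Y : Type u) (_ : TopologicalSpace Y) (_ : T35Space Y),
    LindelofSpace Y ∧ ¬ LindelofSpace (Y × (ℕ → ℕ))

/-- The Hurewicz property: every Čech-complete space in which `X` embeds contains a
σ-compact subspace containing the image of `X`. -/
def HurewiczSpace (X : Type u) [TopologicalSpace X] : Prop :=
  ∀ (Y : Type u) (_ : TopologicalSpace Y) (_ : T35Space Y), CechComplete Y →
    ∀ f : X → Y, Topology.IsEmbedding f → ∃ S : Set Y, IsSigmaCompact S ∧ range f ⊆ S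

/-- A space is projectively σ-compact if each of its continuous images in a separable
metrizable space is σ-compact. -/
def ProjectivelySigmaCompact (X : Type u) [TopologicalSpace X] : Prop :=
  ∀ (M : Type u) (_ : TopologicalSpace M) (_ : SeparableSpace M) (_ : MetrizableSpace M)
    (f : X → M), Continuous f → IsSigmaCompact (range f)

/-- A space is projectively countable if each of its continuous images in a separable
metrizable space is countable. -/
def ProjectivelyCountable (X : Type u) [TopologicalSpace X] : Prop :=
  ∀ (M : Type u) (_ : TopologicalSpace M) (_ : SeparableSpace M) (_ : MetrizableSpace M)
    (f : X → M), Continuous f → (range f).Countable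

/-- The Alster property. -/
def AlsterSpace (X : Type*) [TopologicalSpace X] : Prop :=
  ∀ G : Set (Set X), (∀ g ∈ G, IsGδ g) → ⋃₀ G = univ →
    (∀ K : Set X, IsCompact K → ∃ F : Set (Set X), F ⊆ G ∧ F.Finite ∧ K ⊆ ⋃₀ F) →
    ∃ C : Set (Set X), C ⊆ G ∧ C.Countable ∧ ⋃₀ C = univ

/-- A compact set has countable character if it has a countable neighborhood base of
open sets. -/
def HasCountableChar {X : Type*} [TopologicalSpace X] (L : Set X) : Prop :=
  ∃ B : ℕ → Set X, (∀ n, IsOpen (B n) ∧ L ⊆ B n) ∧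
    ∀ U : Set X, IsOpen U → L ⊆ U → ∃ n, B n ⊆ U

/-- A space is of countable type if every compact set is contained in a compact set
of countable character. -/
def CountableType (X : Type*) [TopologicalSpace X] : Prop :=
  ∀ K : Set X, IsCompact K → ∃ L : Set X, IsCompact L ∧ K ⊆ L ∧ HasCountableChar L

/-- A space is nowhere locally compact if no point has a compact neighborhood. -/
def NowhereLocallyCompact (X : Type*) [TopologicalSpace X] : Prop :=
  ∀ x : X, ∀ K ∈ nhds x, ¬ IsCompact (K : Set X)

/-- Weight at most `c`: there is a basis of cardinality at most `c`. -/
def WeightLE (X : Type u) [TopologicalSpace X] (c : Cardinal.{u}) : Prop :=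
  ∃ B : Set (Set X), IsTopologicalBasis B ∧ Cardinal.mk B ≤ c

/-- A space is Frolík if it is homeomorphic to a closed subspace of a countable product
of σ-compact (Tychonoff) spaces. -/
def FrolikSpace (X : Type u) [TopologicalSpace X] : Prop :=
  ∃ (Y : ℕ → Type u) (_ : ∀ n, TopologicalSpace (Y n)) (_ : ∀ n, T35Space (Y n))
    (_ : ∀ n, SigmaCompactSpace (Y n)) (C : Set (∀ n, Y n)),
    IsClosed C ∧ Nonempty (X ≃ₜ ↥C)

/-- An s-space: some compactification has a countable open source for `X`. -/
def SSpace (X : Type u) [TopologicalSpace X] : Prop :=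
  ∃ (K : Type u) (_ : TopologicalSpace K) (_ : CompactSpace K) (_ : T2Space K)
    (e : X → K), Topology.IsEmbedding e ∧ DenseRange e ∧
      ∃ S : Set (Set K), S.Countable ∧ (∀ s ∈ S, IsOpen s) ∧
        ∃ F : Set (Set (Set K)), (∀ T ∈ F, T ⊆ S ∧ T.Nonempty) ∧
          range e = ⋃ T ∈ F, ⋂₀ T

/-- A space is Lindelöf p if it admits a perfect map onto a separable metrizable space. -/
def LindelofP (X : Type u) [TopologicalSpace X] : Prop :=
  ∃ (M : Type u) (_ : TopologicalSpace M) (_ : SeparableSpace M) (_ : MetrizableSpace M)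
    (f : X → M), IsPerfectMap f ∧ Surjective f

/-- A space is proper K-analytic if it admits a perfect map onto an analytic subspace
of `ℝ^ω`. -/
def ProperKAnalytic (X : Type u) [TopologicalSpace X] : Prop :=
  ∃ A : Set (ℕ → ℝ), IsAnalyticSpace ↥A ∧ ∃ f : X → ↥A, IsPerfectMap f ∧ Surjective f

/-- A space is proper K-Lusin if it admits a perfect map onto a Lusin subspace of `ℝ^ω`. -/
def ProperKLusin (X : Type u) [TopologicalSpace X] : Prop :=
  ∃ A : Set (ℕ → ℝ), IsLusinSpace ↥A ∧ ∃ f : X → ↥A, IsPerfectMap f ∧ Surjective f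

/-- A space is absolute Borel if, viewed as a subset of its Stone–Čech compactification,
it belongs to the σ-algebra generated by the closed sets. -/
def AbsoluteBorel (X : Type u) [TopologicalSpace X] : Prop :=
  MeasurableSet[MeasurableSpace.generateFrom {s : Set (StoneCech X) | IsClosed s}]
    (Set.range (stoneCechUnit : X → StoneCech X))


section AuxKLusinRothberger

universe v

open Topology Filter

section StoneCechInducing
variable {Y : Type v} [TopologicalSpace Y] [T35Space Y]

theorem isInducing_stoneCechUnit' : IsInducing (stoneCechUnit : Y → StoneCech Y) := by
  rw [isInducing_iff_nhds]
  intro y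
  refine le_antisymm (continuous_stoneCechUnit.tendsto y).le_comap ?_
  intro U hU
  rw [mem_comap]
  obtain ⟨f, hfc, hf0, hf1⟩ := CompletelyRegularSpace.completely_regular y
    ((interior U)ᶜ) isOpen_interior.isClosed_compl
    (by simpa using mem_interior_iff_mem_nhds.2 hU)
  refine ⟨(stoneCechExtend hfc) ⁻¹' ({1}ᶜ), ?_, ?_⟩
  · refine IsOpen.mem_nhds ((isOpen_compl_singleton).preimage (continuous_stoneCechExtend hfc)) ?_
    simp only [mem_preimage, mem_compl_iff, mem_singleton_iff]
    have : stoneCechExtend hfc (stoneCechUnit y) = f y := congrFun (stoneCechExtend_extends hfc) y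
    rw [this, hf0]
    exact fun h => (by norm_num [unitInterval] : (0:unitInterval) ≠ 1) h
  · intro y' hy'
    simp only [mem_preimage, mem_compl_iff, mem_singleton_iff] at hy'
    rw [show stoneCechExtend hfc (stoneCechUnit y') = f y' from congrFun (stoneCechExtend_extends hfc) y'] at hy'
    have : y' ∈ interior U := by
      by_contra h
      exact hy' (hf1 h)
    exact interior_subset this

end StoneCechInducing

section Engine
variable {K : Type v} [TopologicalSpace K] [CompactSpace K] [T2Space K]

lemma sigma_inter_closed {A C : Set K} (hA : IsSigmaCompact A) (hC : IsClosed C) :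
    IsSigmaCompact (A ∩ C) := by
  obtain ⟨T, hT, rfl⟩ := hA
  exact ⟨fun n => T n ∩ C, fun n => (hT n).inter_right hC, by rw [iUnion_inter]⟩

lemma sigma_union' {s t : Set K} (hs : IsSigmaCompact s) (ht : IsSigmaCompact t) :
    IsSigmaCompact (s ∪ t) := by
  rw [union_eq_iUnion]
  exact isSigmaCompact_iUnion _ (by rintro (_|_) <;> simpa)

lemma nonempty_of_not_sigma {A : Set K} (h : ¬ IsSigmaCompact A) : A.Nonempty := by
  rcases A.eq_empty_or_nonempty with rfl | hne
  · exact absurd ⟨fun _ => ∅, fun _ => isCompact_empty, by simp⟩ h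
  · exact hne

lemma light_sigma {A : Set K} (hLin : IsLindelof A)
    (h : ∀ x ∈ A, ∃ V : Set K, IsOpen V ∧ x ∈ V ∧ IsSigmaCompact (A ∩ closure V)) :
    IsSigmaCompact A := by
  choose V hVo hVx hVs using h
  have hcov : A ⊆ ⋃ x : A, V x.1 x.2 := fun y hy => mem_iUnion.2 ⟨⟨y, hy⟩, hVx y hy⟩
  obtain ⟨r, hrc, hrs⟩ := hLin.elim_countable_subcover (fun x : A => V x.1 x.2)
    (fun x => hVo x.1 x.2) hcov
  haveI := hrc.to_subtype
  have hAeq : A = ⋃ x : r, A ∩ closure (V x.1.1 x.1.2) := by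
    apply Subset.antisymm
    · intro y hy
      obtain ⟨x, hxr, hyx⟩ := mem_iUnion₂.1 (hrs hy)
      exact mem_iUnion.2 ⟨⟨x, hxr⟩, hy, subset_closure hyx⟩
    · exact iUnion_subset fun x => inter_subset_left
  rw [hAeq]
  exact isSigmaCompact_iUnion _ fun x => hVs x.1.1 x.1.2

lemma split_lemma {S : Set K} {G : ℕ → Set K} (hG : ∀ n, IsOpen (G n)) (hSG : S = ⋂ n, G n)
    (hLinS : IsLindelof S) {A : Set K} (hAC : ∃ C, IsClosed C ∧ A = S ∩ C)
    (hns : ¬ IsSigmaCompact A) (n : ℕ) :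
    ∃ A₀ A₁ : Set K,
      ((∃ C, IsClosed C ∧ A₀ = S ∩ C) ∧ ¬ IsSigmaCompact A₀ ∧ A₀ ⊆ A ∧ closure A₀ ⊆ G n) ∧
      ((∃ C, IsClosed C ∧ A₁ = S ∩ C) ∧ ¬ IsSigmaCompact A₁ ∧ A₁ ⊆ A ∧ closure A₁ ⊆ G n) ∧
      closure A₀ ∩ closure A₁ = ∅ := by
  obtain ⟨C, hC, hACeq⟩ := hAC
  have hAS : A ⊆ S := hACeq ▸ inter_subset_left
  have hAG : ∀ x ∈ A, ∀ m, x ∈ G m := fun x hx m => by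
    have := hAS hx; rw [hSG] at this; exact mem_iInter.1 this m
  have hALin : IsLindelof A := hACeq ▸ hLinS.inter_right hC
  by_cases hh : ∃ x₀ x₁ : K,
      (x₀ ∈ A ∧ ∀ V : Set K, IsOpen V → x₀ ∈ V → ¬ IsSigmaCompact (A ∩ closure V)) ∧
      (x₁ ∈ A ∧ ∀ V : Set K, IsOpen V → x₁ ∈ V → ¬ IsSigmaCompact (A ∩ closure V)) ∧ x₀ ≠ x₁
  · obtain ⟨x₀, x₁, h₀, h₁, hne⟩ := hh
    obtain ⟨U₀, U₁, hU₀, hU₁, hx₀, hx₁, hdU⟩ := t2_separation hne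
    have mk : ∀ x : K,
        (x ∈ A ∧ ∀ V : Set K, IsOpen V → x ∈ V → ¬ IsSigmaCompact (A ∩ closure V)) →
        ∀ U : Set K, IsOpen U → x ∈ U →
        ∃ V, IsOpen V ∧ x ∈ V ∧ closure V ⊆ U ∩ G n ∧ ¬ IsSigmaCompact (A ∩ closure V) := by
      intro x hx U hUo hxU
      have hmem : U ∩ G n ∈ 𝓝 x := (hUo.inter (hG n)).mem_nhds ⟨hxU, hAG x hx.1 n⟩
      obtain ⟨t, htm, htc, hts⟩ := exists_mem_nhds_isClosed_subset hmem
      exact ⟨interior t, isOpen_interior, mem_interior_iff_mem_nhds.2 htm,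
        (closure_minimal interior_subset htc).trans hts,
        hx.2 _ isOpen_interior (mem_interior_iff_mem_nhds.2 htm)⟩
    obtain ⟨V₀, hV₀o, hV₀x, hV₀cl, hV₀ns⟩ := mk x₀ h₀ U₀ hU₀ hx₀
    obtain ⟨V₁, hV₁o, hV₁x, hV₁cl, hV₁ns⟩ := mk x₁ h₁ U₁ hU₁ hx₁
    have hcl : ∀ V : Set K, closure (A ∩ closure V) ⊆ closure V :=
      fun V => closure_minimal inter_subset_right isClosed_closure
    refine ⟨A ∩ closure V₀, A ∩ closure V₁,
      ⟨⟨C ∩ closure V₀, hC.inter isClosed_closure, by rw [hACeq, inter_assoc]⟩, hV₀ns,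
        inter_subset_left, (hcl V₀).trans (hV₀cl.trans inter_subset_right)⟩,
      ⟨⟨C ∩ closure V₁, hC.inter isClosed_closure, by rw [hACeq, inter_assoc]⟩, hV₁ns,
        inter_subset_left, (hcl V₁).trans (hV₁cl.trans inter_subset_right)⟩, ?_⟩
    apply eq_empty_of_subset_empty
    intro x hx
    exact (hdU.le_bot ⟨(hV₀cl.trans inter_subset_left) ((hcl V₀) hx.1),
      (hV₁cl.trans inter_subset_left) ((hcl V₁) hx.2)⟩)
  · exfalso; apply hns
    by_cases hex : ∃ x : K, x ∈ A ∧ ∀ V : Set K, IsOpen V → x ∈ V →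
        ¬ IsSigmaCompact (A ∩ closure V)
    · obtain ⟨xs, hxs⟩ := hex
      have hlight : ∀ x ∈ A, x ≠ xs →
          ∃ V : Set K, IsOpen V ∧ x ∈ V ∧ IsSigmaCompact (A ∩ closure V) := by
        intro x hx hne
        by_contra hcon
        push_neg at hcon
        exact hh ⟨x, xs, ⟨hx, fun V hVo hVx => hcon V hVo hVx⟩, hxs, hne⟩
      -- shrinking neighborhoods of xs
      have step : ∀ U : Set K, ∀ m : ℕ, ∃ W : Set K,
          (IsOpen U ∧ xs ∈ U) → (IsOpen W ∧ xs ∈ W ∧ closure W ⊆ U ∩ G m) := by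
        intro U m
        by_cases h : IsOpen U ∧ xs ∈ U
        · have hmem : U ∩ G m ∈ 𝓝 xs := (h.1.inter (hG m)).mem_nhds ⟨h.2, hAG xs hxs.1 m⟩
          obtain ⟨t, htm, htc, hts⟩ := exists_mem_nhds_isClosed_subset hmem
          exact ⟨interior t, fun _ => ⟨isOpen_interior, mem_interior_iff_mem_nhds.2 htm,
            (closure_minimal interior_subset htc).trans hts⟩⟩
        · exact ⟨univ, fun hc => absurd hc h⟩
      choose W hW using step
      set V : ℕ → Set K := fun m => Nat.rec univ (fun m Vm => W Vm m) m with hV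
      have hVgood : ∀ m, IsOpen (V m) ∧ xs ∈ V m := by
        intro m; induction m with
        | zero => exact ⟨isOpen_univ, mem_univ xs⟩
        | succ m ih =>
          have := hW (V m) m ih
          exact ⟨this.1, this.2.1⟩
      have hVcl : ∀ m, closure (V (m+1)) ⊆ V m ∩ G m := fun m => (hW (V m) m (hVgood m)).2.2
      have hACs : IsCompact (A ∩ ⋂ m, closure (V (m+1))) := by
        have hCsS : (⋂ m, closure (V (m+1))) ⊆ S := by
          rw [hSG]
          exact subset_iInter fun m => (iInter_subset _ m).trans ((hVcl m).trans inter_subset_right)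
        have heq : A ∩ ⋂ m, closure (V (m+1)) = C ∩ ⋂ m, closure (V (m+1)) := by
          rw [hACeq, inter_assoc]
          ext x
          refine ⟨fun hx => hx.2, fun hx => ⟨hCsS hx.2, hx⟩⟩
        rw [heq]
        exact ((isClosed_iInter fun m => isClosed_closure).isCompact).inter_left hC
      have hpiece : ∀ m, IsSigmaCompact (A \ V (m+1)) := by
        intro m
        have hrel : A \ V (m+1) = A ∩ (V (m+1))ᶜ := rfl
        apply light_sigma (hALin.inter_right (hVgood (m+1)).1.isClosed_compl)
        intro x hx
        have hne : x ≠ xs := fun h => hx.2 (h ▸ (hVgood (m+1)).2)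
        obtain ⟨Vx, hVxo, hVxx, hVxs⟩ := hlight x hx.1 hne
        refine ⟨Vx, hVxo, hVxx, ?_⟩
        have : (A ∩ (V (m+1))ᶜ) ∩ closure Vx = (A ∩ closure Vx) ∩ (V (m+1))ᶜ := by
          ext y; constructor
          · exact fun hy => ⟨⟨hy.1.1, hy.2⟩, hy.1.2⟩
          · exact fun hy => ⟨⟨hy.1.1, hy.2⟩, hy.1.2⟩
        rw [this]
        exact sigma_inter_closed hVxs (hVgood (m+1)).1.isClosed_compl
      have hcover : A = (A ∩ ⋂ m, closure (V (m+1))) ∪ ⋃ m, (A \ V (m+1)) := by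
        apply Subset.antisymm
        · intro x hx
          by_cases hall : ∀ m, x ∈ V (m+1)
          · exact Or.inl ⟨hx, mem_iInter.2 fun m => subset_closure (hall m)⟩
          · push_neg at hall
            obtain ⟨m, hm⟩ := hall
            exact Or.inr (mem_iUnion.2 ⟨m, hx, hm⟩)
        · rintro x (hx | hx)
          · exact hx.1
          · obtain ⟨m, hm⟩ := mem_iUnion.1 hx
            exact hm.1
      rw [hcover]
      exact sigma_union' hACs.isSigmaCompact (isSigmaCompact_iUnion _ hpiece)
    · push_neg at hex
      apply light_sigma hALin
      intro x hx
      obtain ⟨Vx, hVxo, hVxx, hVxs⟩ := hex x hx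
      exact ⟨Vx, hVxo, hVxx, hVxs⟩

theorem main_engine {S : Set K} {G : ℕ → Set K} (hG : ∀ n, IsOpen (G n)) (hSG : S = ⋂ n, G n)
    (hLinS : IsLindelof S) (hns : ¬ IsSigmaCompact S)
    {X : Type*} [TopologicalSpace X] [T2Space X]
    (g : S → X) (hgc : Continuous g) (hgi : Injective g) (hgs : Surjective g)
    (hR : RothbergerSpace X) : False := by
  classical
  -- choice of splittings
  have key : ∀ (A : Set K) (n : ℕ), ∃ P : Bool → Set K,
      ((∃ C, IsClosed C ∧ A = S ∩ C) ∧ ¬ IsSigmaCompact A) →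
      ((∀ b, (∃ C, IsClosed C ∧ P b = S ∩ C) ∧ ¬ IsSigmaCompact (P b) ∧ P b ⊆ A ∧
        closure (P b) ⊆ G n) ∧ closure (P false) ∩ closure (P true) = ∅) := by
    intro A n
    by_cases h : (∃ C, IsClosed C ∧ A = S ∩ C) ∧ ¬ IsSigmaCompact A
    · obtain ⟨A₀, A₁, h₀, h₁, hd⟩ := split_lemma hG hSG hLinS h.1 h.2 n
      refine ⟨fun b => cond b A₁ A₀, fun _ => ⟨fun b => ?_, hd⟩⟩
      cases b
      · exact h₀
      · exact h₁
    · exact ⟨fun _ => ∅, fun hc => absurd hc h⟩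
  choose Φ hΦ using key
  -- the scheme
  let F : List Bool → Set K := fun l => List.rec S (fun b t ih => Φ ih t.length b) l
  have hFnil : F [] = S := rfl
  have hFcons : ∀ (b : Bool) (t : List Bool), F (b :: t) = Φ (F t) t.length b := fun _ _ => rfl
  have hGood : ∀ l : List Bool, (∃ C, IsClosed C ∧ F l = S ∩ C) ∧ ¬ IsSigmaCompact (F l) := by
    intro l
    induction l with
    | nil => exact ⟨⟨univ, isClosed_univ, (inter_univ S).symm⟩, hns⟩
    | cons b t ih =>
      have := (hΦ (F t) t.length ih).1 b
      exact ⟨this.1, this.2.1⟩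
  have hsub : ∀ (b : Bool) (t : List Bool), F (b :: t) ⊆ F t :=
    fun b t => ((hΦ (F t) t.length (hGood t)).1 b).2.2.1
  have hclG : ∀ (b : Bool) (t : List Bool), closure (F (b :: t)) ⊆ G t.length :=
    fun b t => ((hΦ (F t) t.length (hGood t)).1 b).2.2.2
  have hdisj0 : ∀ t : List Bool, closure (F (false :: t)) ∩ closure (F (true :: t)) = ∅ :=
    fun t => (hΦ (F t) t.length (hGood t)).2
  -- level disjointness
  have hdisj : ∀ (n : ℕ) (l l' : List Bool), l.length = n → l'.length = n → l ≠ l' →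
      closure (F l) ∩ closure (F l') = ∅ := by
    intro n
    induction n with
    | zero =>
      intro l l' hl hl' hne
      rw [List.length_eq_zero_iff] at hl hl'
      exact absurd (hl.trans hl'.symm) hne
    | succ n ih =>
      rintro (_ | ⟨b, t⟩) (_ | ⟨b', t'⟩) hl hl' hne
      · simp at hl
      · simp at hl
      · simp at hl'
      · simp only [List.length_cons, Nat.add_right_cancel_iff] at hl hl'
        by_cases htt : t = t'
        · subst htt
          have hbb : b ≠ b' := fun h => hne (by rw [h])
          cases b <;> cases b'
          · exact absurd rfl hbb
          · exact hdisj0 t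
          · rw [inter_comm]; exact hdisj0 t
          · exact absurd rfl hbb
        · have hd := ih t t' hl hl' htt
          have h1 : closure (F (b :: t)) ⊆ closure (F t) := closure_mono (hsub b t)
          have h2 : closure (F (b' :: t')) ⊆ closure (F t') := closure_mono (hsub b' t')
          exact eq_empty_of_subset_empty (hd ▸ inter_subset_inter h1 h2)
  -- finiteness of levels
  have hfin : ∀ n : ℕ, {l : List Bool | l.length = n}.Finite := by
    intro n
    induction n with
    | zero => simp only [List.length_eq_zero_iff]; exact finite_singleton _
    | succ n ih =>
      have : {l : List Bool | l.length = n + 1} =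
          image2 List.cons (univ : Set Bool) {l : List Bool | l.length = n} := by
        ext l
        constructor
        · intro hl
          match l with
          | [] => simp at hl
          | b :: t => exact ⟨b, mem_univ b, t, by simpa using hl, rfl⟩
        · rintro ⟨b, -, t, ht, rfl⟩
          simpa using ht
      rw [this]
      exact Set.Finite.image2 _ finite_univ ih
  -- the compact limit set
  let Lev : ℕ → Set K := fun n => ⋃ l ∈ {l : List Bool | l.length = n}, closure (F l)
  have hLevClosed : ∀ n, IsClosed (Lev n) :=
    fun n => (hfin n).isClosed_biUnion fun l _ => isClosed_closure
  let L : Set K := ⋂ n, Lev n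
  have hLcomp : IsCompact L := (isClosed_iInter hLevClosed).isCompact
  have hLS : L ⊆ S := by
    rw [hSG]
    refine subset_iInter fun m => ?_
    intro x hx
    have hx' : x ∈ Lev (m + 1) := mem_iInter.1 hx (m + 1)
    obtain ⟨l, hl, hxl⟩ := mem_iUnion₂.1 hx'
    match l with
    | [] => simp at hl
    | b :: t =>
      have : t.length = m := by simpa using hl
      exact this ▸ hclG b t hxl
  -- the compact sets A n b
  let A : ℕ → Bool → Set K := fun n b =>
    L ∩ ⋃ t ∈ {t : List Bool | t.length = n}, closure (F (b :: t))
  have hAcomp : ∀ n b, IsCompact (A n b) := fun n b =>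
    hLcomp.inter_right ((hfin n).isClosed_biUnion fun l _ => isClosed_closure)
  have hAS : ∀ n b, A n b ⊆ S := fun n b => inter_subset_left.trans hLS
  have hAdisj : ∀ n, A n false ∩ A n true = ∅ := by
    intro n
    apply eq_empty_of_subset_empty
    rintro x ⟨⟨-, hx0⟩, -, hx1⟩
    obtain ⟨t, ht, hxt⟩ := mem_iUnion₂.1 hx0
    obtain ⟨t', ht', hxt'⟩ := mem_iUnion₂.1 hx1
    have ht2 : t.length = n := ht
    have ht2' : t'.length = n := ht'
    have : closure (F (false :: t)) ∩ closure (F (true :: t')) = ∅ :=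
      hdisj (n + 1) (false :: t) (true :: t') (by simp [ht2]) (by simp [ht2']) (by simp)
    exact this ▸ mem_inter hxt hxt'
  -- branches
  have hbranch : ∀ j : ℕ → Bool, ∃ x : K, ∀ n, x ∈ A n (j n) := by
    intro j
    let B : ℕ → List Bool := fun n => Nat.rec [] (fun n Bn => j n :: Bn) n
    have hBcons : ∀ n, B (n + 1) = j n :: B n := fun n => rfl
    have hBlen : ∀ n, (B n).length = n := by
      intro n; induction n with
      | zero => rfl
      | succ n ih => simp [hBcons, ih]
    have hnested : ∀ n, closure (F (B (n + 1))) ⊆ closure (F (B n)) := by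
      intro n
      rw [hBcons]
      exact closure_mono (hsub _ _)
    obtain ⟨x, hx⟩ := IsCompact.nonempty_iInter_of_sequence_nonempty_isCompact_isClosed
      (fun n => closure (F (B n))) hnested
      (fun n => (nonempty_of_not_sigma (hGood (B n)).2).closure)
      isClosed_closure.isCompact (fun n => isClosed_closure)
    refine ⟨x, fun n => ⟨?_, ?_⟩⟩
    · refine mem_iInter.2 fun m => mem_iUnion₂.2 ⟨B m, hBlen m, mem_iInter.1 hx m⟩
    · exact mem_iUnion₂.2 ⟨B n, hBlen n, by rw [← hBcons]; exact mem_iInter.1 hx (n + 1)⟩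
  -- transfer to X
  let D : ℕ → Bool → Set X := fun n b => g '' (Subtype.val ⁻¹' (A n b))
  have hDcomp : ∀ n b, IsCompact (D n b) := by
    intro n b
    apply IsCompact.image _ hgc
    exact (IsInducing.subtypeVal.isCompact_preimage_iff (by simpa using hAS n b)).2 (hAcomp n b)
  have hDclosed : ∀ n b, IsClosed (D n b) := fun n b => (hDcomp n b).isClosed
  -- the Rothberger covers
  let U : ℕ → Set (Set X) := fun n => {(D n false)ᶜ, (D n true)ᶜ}
  have hUopen : ∀ n, ∀ u ∈ U n, IsOpen u := by
    rintro n u (rfl | rfl)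
    · exact (hDclosed n false).isOpen_compl
    · exact (hDclosed n true).isOpen_compl
  have hUcov : ∀ n, ⋃₀ U n = univ := by
    intro n
    apply eq_univ_of_forall
    intro x
    obtain ⟨s, rfl⟩ := hgs x
    have : s.1 ∉ A n false ∨ s.1 ∉ A n true := by
      by_contra hcon
      push_neg at hcon
      have := hAdisj n
      exact absurd (this ▸ mem_inter hcon.1 hcon.2) (notMem_empty _)
    rcases this with h | h
    · exact ⟨(D n false)ᶜ, Or.inl rfl, fun ⟨s', hs', hgs'⟩ => h ((hgi hgs') ▸ hs')⟩
    · exact ⟨(D n true)ᶜ, Or.inr rfl, fun ⟨s', hs', hgs'⟩ => h ((hgi hgs') ▸ hs')⟩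
  obtain ⟨V, hVmem, hVcov⟩ := hR U hUopen hUcov
  let j : ℕ → Bool := fun n => if V n = (D n false)ᶜ then false else true
  have hVj : ∀ n, V n = (D n (j n))ᶜ := by
    intro n
    by_cases h : V n = (D n false)ᶜ
    · simp only [j, if_pos h]; exact h
    · simp only [j, if_neg h]
      rcases hVmem n with h' | h'
      · exact absurd h' h
      · exact h'
  obtain ⟨x, hx⟩ := hbranch j
  have hxS : x ∈ S := hAS 0 (j 0) (hx 0)
  have : g ⟨x, hxS⟩ ∈ ⋃ n, V n := hVcov ▸ mem_univ _
  obtain ⟨n, hn⟩ := mem_iUnion.1 this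
  rw [hVj n] at hn
  exact hn ⟨⟨x, hxS⟩, hx n, rfl⟩

end Engine

end AuxKLusinRothberger

/-- K-Lusin Rothberger spaces are σ-compact. -/
theorem kLusin_rothberger_sigmaCompact
    (X : Type u) [TopologicalSpace X] [T35Space X]
    (hK : KLusin X) (hR : RothbergerSpace X) : SigmaCompactSpace X := by
  obtain ⟨Y, tY, t35Y, hLinY, hCech, f, hfc, hfi, hfs⟩ := hK
  haveI := hLinY
  have hemb : Topology.IsEmbedding (stoneCechUnit : Y → StoneCech Y) :=
    ⟨isInducing_stoneCechUnit', injective_stoneCechUnit_of_t35Space⟩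
  set S := Set.range (stoneCechUnit : Y → StoneCech Y) with hS
  let h : Y ≃ₜ S := hemb.toHomeomorph
  let g : S → X := f ∘ h.symm
  have hgc : Continuous g := hfc.comp h.symm.continuous
  have hgi : Injective g := hfi.comp h.symm.injective
  have hgs : Surjective g := hfs.comp h.symm.surjective
  obtain ⟨G, hG, hSG⟩ := hCech.eq_iInter_nat
  have hLinS : IsLindelof S := by
    have := (isLindelof_univ (X := Y)).image continuous_stoneCechUnit
    simpa [image_univ] using this
  by_cases hsig : IsSigmaCompact S
  · rw [← isSigmaCompact_univ_iff]
    have h1 : IsSigmaCompact (univ : Set S) := isSigmaCompact_iff_isSigmaCompact_univ.1 hsig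
    have him := h1.image hgc
    rwa [image_univ, Surjective.range_eq hgs] at him
  · exact absurd hR fun hR' => main_engine hG hSG hLinS hsig g hgc hgi hgs hR'
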